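/- Let K be a field and A a K-algebra. For a ring homomorphism i : S → R of unital rings, the following are equivalent: (1) R is separable as an S-algebra, i.e. the multiplication map R ⊗_S R → R has an R-bimodule section; (2) the restriction of scalars functor from left R-modules to left S-modules is separable. -/

import Mathlib

open CategoryTheory TensorProduct

/-- A functor `U` is separable if the natural transformation
`Hom(X, Y) → Hom(U X, U Y)`, `f ↦ U.map f`, admits a natural retraction. -/
def SeparableFunctor {𝔹 : Type*} {𝔸 : Type*} [Category 𝔹] [Category 𝔸]
    (U : 𝔹 ⥤ 𝔸) : Prop :=
  ∃ P : ∀ (X Y : 𝔹), (U.obj X ⟶ U.obj Y) → (X ⟶ Y),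
    (∀ (X Y : 𝔹) (f : X ⟶ Y), P X Y (U.map f) = f) ∧
    (∀ (X' X Y Y' : 𝔹) (a : X' ⟶ X) (b : Y ⟶ Y') (g : U.obj X ⟶ U.obj Y),
      P X' Y' (U.map a ≫ g ≫ U.map b) = a ≫ P X Y g ≫ b)


section Helpers

variable {S : Type} [CommRing S] {R : Type} [Ring R] [Algebra S R]
variable {X Y X' Y' : Type*} [AddCommGroup X] [AddCommGroup Y] [AddCommGroup X'] [AddCommGroup Y']
variable [Module R X] [Module R Y] [Module R X'] [Module R Y']

/-- Auxiliary additive map `R ⊗[S] R →+ Y`, `a ⊗ b ↦ a • g (b • x)`. -/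
noncomputable def sepAux (g : X →+ Y)
    (hgs : ∀ (s : S) (z : X), g (algebraMap S R s • z) = algebraMap S R s • g z)
    (x : X) : R ⊗[S] R →+ Y :=
  TensorProduct.liftAddHom
    (AddMonoidHom.mk'
      (fun a => AddMonoidHom.mk' (fun b => a • g (b • x)) (fun b b' => by
        show a • g ((_ + _) • x) = _; rw [add_smul, g.map_add, smul_add]))
      (fun a a' => AddMonoidHom.ext fun b => by simp [add_smul]))
    (fun s a b => by
      show (s • a) • g (b • x) = a • g ((s • b) • x)
      rw [Algebra.smul_def, Algebra.smul_def, Algebra.commutes s a, mul_smul, mul_smul, hgs])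

theorem sepAux_tmul (g : X →+ Y) (hgs) (x : X) (a b : R) :
    sepAux g hgs x (a ⊗ₜ[S] b) = a • g (b • x) := rfl

theorem sepAux_add (g : X →+ Y) (hgs) (x x' : X) (t : R ⊗[S] R) :
    sepAux g hgs (x + x') t = sepAux g hgs x t + sepAux g hgs x' t := by
  induction t with
  | zero => simp
  | tmul a b => simp [sepAux_tmul, smul_add, g.map_add]
  | add t₁ t₂ h1 h2 => simp only [map_add, h1, h2]; abel

theorem sepAux_mul_left (g : X →+ Y) (hgs) (x : X) (r : R) (t : R ⊗[S] R) :
    sepAux g hgs x ((r ⊗ₜ[S] (1 : R)) * t) = r • sepAux g hgs x t := by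
  induction t with
  | zero => simp
  | tmul a b => rw [Algebra.TensorProduct.tmul_mul_tmul, one_mul, sepAux_tmul, sepAux_tmul,
      mul_smul]
  | add t₁ t₂ h1 h2 => rw [mul_add, map_add, map_add, h1, h2, smul_add]

theorem sepAux_mul_right (g : X →+ Y) (hgs) (x : X) (r : R) (t : R ⊗[S] R) :
    sepAux g hgs x (t * ((1 : R) ⊗ₜ[S] r)) = sepAux g hgs (r • x) t := by
  induction t with
  | zero => simp
  | tmul a b => rw [Algebra.TensorProduct.tmul_mul_tmul, mul_one, sepAux_tmul, sepAux_tmul,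
      mul_smul]
  | add t₁ t₂ h1 h2 => rw [add_mul, map_add, map_add, h1, h2]

theorem sepAux_of_linear (g : X →+ Y) (hgs) (f : X →ₗ[R] Y) (hf : ∀ z, g z = f z)
    (x : X) (t : R ⊗[S] R) :
    sepAux g hgs x t = LinearMap.mul' S R t • f x := by
  induction t with
  | zero => simp
  | tmul a b => rw [sepAux_tmul, hf, f.map_smul, LinearMap.mul'_apply, mul_smul]
  | add t₁ t₂ h1 h2 => rw [map_add, map_add, h1, h2, add_smul]

theorem sepAux_comp (g : X →+ Y) (hgs) (g' : X' →+ Y') (hgs')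
    (a : X' →ₗ[R] X) (b : Y →ₗ[R] Y') (hcomp : ∀ z, g' z = b (g (a z)))
    (x : X') (t : R ⊗[S] R) :
    sepAux g' hgs' x t = b (sepAux g hgs (a x) t) := by
  induction t with
  | zero => simp
  | tmul p q => rw [sepAux_tmul, sepAux_tmul, hcomp, a.map_smul, b.map_smul]
  | add t₁ t₂ h1 h2 => rw [map_add, map_add, h1, h2, b.map_add]

end Helpers

/-- `R/S` is separable (the multiplication `R ⊗[S] R → R` has an `R`-bimodule
section) if and only if the restriction of scalars functor from `R`-modules to
`S`-modules is separable. -/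
theorem separable_extension_iff_restriction_separable
    (S : Type) [CommRing S] (R : Type) [Ring R] [Algebra S R] :
    (∃ σ : R →ₗ[S] R ⊗[S] R,
        (∀ x : R, LinearMap.mul' S R (σ x) = x) ∧
        (∀ (r x : R), σ (r * x) = (r ⊗ₜ[S] (1 : R)) * σ x) ∧
        (∀ (r x : R), σ (x * r) = σ x * ((1 : R) ⊗ₜ[S] r))) ↔
      SeparableFunctor (ModuleCat.restrictScalars (algebraMap S R)) := by
  set U := ModuleCat.restrictScalars (R := S) (S := R) (algebraMap S R) with hU
  have hsmulmul : ∀ (r : R) (t : R ⊗[S] R), r • t = (r ⊗ₜ[S] (1 : R)) * t := by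
    intro r t
    induction t with
    | zero => simp
    | tmul a b => rw [Algebra.TensorProduct.tmul_mul_tmul, one_mul, smul_tmul', smul_eq_mul]
    | add t₁ t₂ h1 h2 => rw [smul_add, mul_add, h1, h2]
  constructor
  · rintro ⟨σ, h1, h2, h3⟩
    have hmul : LinearMap.mul' S R (σ 1) = 1 := h1 1
    have hcomm : ∀ r : R, (r ⊗ₜ[S] (1 : R)) * σ 1 = σ 1 * ((1 : R) ⊗ₜ[S] r) := by
      intro r
      have hr1 := h2 r 1
      have hr2 := h3 r 1
      rw [mul_one] at hr1
      rw [one_mul] at hr2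
      rw [← hr1, ← hr2]
    refine ⟨fun X Y g => ModuleCat.ofHom
      { toFun := fun x => sepAux (S := S) (R := R) (X := ↑X) (Y := ↑Y)
          (AddMonoidHom.mk' (fun (z : ↑X) => (g z : ↑Y)) (fun z w => LinearMap.map_add g.hom z w))
          (fun s z => LinearMap.map_smul g.hom s z) x (σ 1)
        map_add' := fun x y => sepAux_add _ _ x y (σ 1)
        map_smul' := fun r x => by
          show sepAux _ _ (r • x) (σ 1) = r • sepAux _ _ x (σ 1)
          exact (sepAux_mul_right _ _ x r (σ 1)).symm.trans
            ((congrArg (sepAux _ _ x) (hcomm r).symm).trans (sepAux_mul_left _ _ x r (σ 1))) }, ?_, ?_⟩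
    · intro X Y f
      refine ModuleCat.hom_ext (LinearMap.ext ?_)
      intro x
      show sepAux (S := S) (R := R) (X := ↑X) (Y := ↑Y)
        (AddMonoidHom.mk' (fun (z : ↑X) => ((U.map f) z : ↑Y))
          (fun z w => LinearMap.map_add (U.map f).hom z w))
        (fun s z => LinearMap.map_smul (U.map f).hom s z) x (σ 1) = f x
      refine (sepAux_of_linear _ _ f.hom ?_ x (σ 1)).trans ?_
      · intro z; rfl
      · rw [hmul, one_smul]
    · intro X' X Y Y' a b g
      refine ModuleCat.hom_ext (LinearMap.ext ?_)
      intro x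
      show sepAux (S := S) (R := R) (X := ↑X') (Y := ↑Y')
        (AddMonoidHom.mk' (fun (z : ↑X') => ((U.map a ≫ g ≫ U.map b) z : ↑Y'))
          (fun z w => LinearMap.map_add (U.map a ≫ g ≫ U.map b).hom z w))
        (fun s z => LinearMap.map_smul (U.map a ≫ g ≫ U.map b).hom s z) x (σ 1)
        = b (sepAux (S := S) (R := R) (X := ↑X) (Y := ↑Y)
        (AddMonoidHom.mk' (fun (z : ↑X) => (g z : ↑Y)) (fun z w => LinearMap.map_add g.hom z w))
        (fun s z => LinearMap.map_smul g.hom s z) (a x) (σ 1))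
      exact sepAux_comp _ _ _ _ a.hom b.hom (fun z => rfl) x (σ 1)
  · rintro ⟨P, hP1, hPnat⟩
    have hμs : ∀ (r : R) (t : R ⊗[S] R),
        LinearMap.mul' S R (r • t) = r * LinearMap.mul' S R t := by
      intro r t
      rw [hsmulmul]
      induction t with
      | zero => simp
      | tmul a b => rw [Algebra.TensorProduct.tmul_mul_tmul, one_mul, LinearMap.mul'_apply,
          LinearMap.mul'_apply, mul_assoc]
      | add t₁ t₂ h1 h2 => rw [mul_add, map_add, map_add, h1, h2, mul_add]
    set A : ModuleCat R := ModuleCat.of R (ULift R) with hA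
    set B : ModuleCat R := ModuleCat.of R (ULift (R ⊗[S] R)) with hB
    let μ : B ⟶ A := ModuleCat.ofHom
      { toFun := fun t => ⟨LinearMap.mul' S R t.down⟩
        map_add' := fun t₁ t₂ => congrArg ULift.up (map_add _ t₁.down t₂.down)
        map_smul' := fun r t => congrArg ULift.up (hμs r t.down) }
    let ν : U.obj A ⟶ U.obj B := ModuleCat.ofHom (X := ↑(U.obj A)) (Y := ↑(U.obj B))
      { toFun := fun x => ⟨(1 : R) ⊗ₜ[S] x.down⟩
        map_add' := fun x y => congrArg ULift.up (TensorProduct.tmul_add 1 x.down y.down)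
        map_smul' := fun s x => congrArg ULift.up (by
          show (1 : R) ⊗ₜ[S] (algebraMap S R s • x.down)
              = algebraMap S R s • ((1 : R) ⊗ₜ[S] x.down)
          rw [algebraMap_smul, smul_tmul', ← smul_tmul, algebraMap_smul]) }
    set σ'' : A ⟶ B := P A B ν with hσ''
    have hretr : σ'' ≫ μ = 𝟙 A := by
      have hn := hPnat A A B A (𝟙 A) μ ν
      rw [U.map_id, Category.id_comp, Category.id_comp] at hn
      have h0 : ν ≫ U.map μ = U.map (𝟙 A) := by
        refine ModuleCat.hom_ext (LinearMap.ext ?_)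
        intro x
        show (⟨LinearMap.mul' S R ((1 : R) ⊗ₜ[S] x.down)⟩ : ULift R) = x
        rw [LinearMap.mul'_apply, one_mul]
        rfl
      rw [h0, hP1] at hn
      exact hn.symm
    have hcomb : ∀ r : R,
        ((ModuleCat.ofHom (X := ULift R) (Y := ULift R)
          { toFun := fun x => ⟨x.down * r⟩
            map_add' := fun x y => congrArg ULift.up (add_mul x.down y.down r)
            map_smul' := fun r' x => congrArg ULift.up (mul_assoc r' x.down r) } : A ⟶ A) ≫ σ'')
          = σ'' ≫
          (ModuleCat.ofHom (X := ULift (R ⊗[S] R)) (Y := ULift (R ⊗[S] R))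
           { toFun := fun t => ⟨t.down * ((1 : R) ⊗ₜ[S] r)⟩
             map_add' := fun t₁ t₂ => congrArg ULift.up (add_mul t₁.down t₂.down _)
             map_smul' := fun r' t => congrArg ULift.up (by
               show (r' • t.down) * ((1 : R) ⊗ₜ[S] r) = r' • (t.down * ((1 : R) ⊗ₜ[S] r))
               rw [hsmulmul, hsmulmul, mul_assoc]) } : B ⟶ B) := by
      intro r
      set ρ : A ⟶ A :=
        (ModuleCat.ofHom (X := ULift R) (Y := ULift R)
         { toFun := fun x => ⟨x.down * r⟩
           map_add' := fun x y => congrArg ULift.up (add_mul x.down y.down r)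
           map_smul' := fun r' x => congrArg ULift.up (mul_assoc r' x.down r) } : A ⟶ A)
      set ρ' : B ⟶ B :=
        (ModuleCat.ofHom (X := ULift (R ⊗[S] R)) (Y := ULift (R ⊗[S] R))
         { toFun := fun t => ⟨t.down * ((1 : R) ⊗ₜ[S] r)⟩
           map_add' := fun t₁ t₂ => congrArg ULift.up (add_mul t₁.down t₂.down _)
           map_smul' := fun r' t => congrArg ULift.up (by
             show (r' • t.down) * ((1 : R) ⊗ₜ[S] r) = r' • (t.down * ((1 : R) ⊗ₜ[S] r))
             rw [hsmulmul, hsmulmul, mul_assoc]) } : B ⟶ B)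
      have hn1 := hPnat A A B B ρ (𝟙 B) ν
      have hn2 := hPnat A A B B (𝟙 A) ρ' ν
      rw [U.map_id, Category.comp_id, Category.comp_id] at hn1
      rw [U.map_id, Category.id_comp, Category.id_comp] at hn2
      have heq : U.map ρ ≫ ν = ν ≫ U.map ρ' := by
        refine ModuleCat.hom_ext (LinearMap.ext ?_)
        intro x
        show (⟨(1 : R) ⊗ₜ[S] (x.down * r)⟩ : ULift (R ⊗[S] R))
          = ⟨((1 : R) ⊗ₜ[S] x.down) * ((1 : R) ⊗ₜ[S] r)⟩
        rw [Algebra.TensorProduct.tmul_mul_tmul, one_mul]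
      rw [heq, hn2] at hn1
      exact hn1.symm
    refine ⟨{ toFun := fun x => (σ'' ⟨x⟩).down
              map_add' := fun x y => congrArg ULift.down (map_add σ''.hom ⟨x⟩ ⟨y⟩)
              map_smul' := fun s x => by
                show (σ'' ⟨s • x⟩).down = s • (σ'' ⟨x⟩).down
                rw [Algebra.smul_def,
                  show (⟨algebraMap S R s * x⟩ : ULift R) = algebraMap S R s • (⟨x⟩ : ULift R)
                    from rfl,
                  map_smul]
                show algebraMap S R s • (σ'' ⟨x⟩).down = s • (σ'' ⟨x⟩).down
                rw [algebraMap_smul] }, ?_, ?_, ?_⟩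
    · intro x
      exact congrArg (fun f : A ⟶ A => (f ⟨x⟩).down) hretr
    · intro r x
      show (σ'' ⟨r * x⟩).down = (r ⊗ₜ[S] (1 : R)) * (σ'' ⟨x⟩).down
      rw [show (⟨r * x⟩ : ULift R) = r • (⟨x⟩ : ULift R) from rfl, map_smul, ← hsmulmul]
      rfl
    · intro r x
      exact congrArg (fun f : A ⟶ B => (f ⟨x⟩).down) (hcomb r)
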